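/- Let B_n be the arrangement in K^3 defined by Q = x·z·(y−z)·∏_{k=1}^n (x+ky). Then D(B_n) is generated by the four derivations θ_E (Euler derivation), z(y−z)∂_z, x∏_{k=1}^n(x+ky)∂_x, and (y−z)∏_{k=1}^n(x+ky)∂_y. -/

import Mathlib

open MvPolynomial

/-- The polynomial ring `S = K[x_1, ..., x_ℓ]`. -/
abbrev MvS (K : Type*) [Field K] (ℓ : ℕ) := MvPolynomial (Fin ℓ) K

variable {K : Type*} [Field K] {ℓ : ℕ}

/-- The linear functional on `K^ℓ` with coefficient vector `c`. -/
noncomputable def ellf (c : Fin ℓ → K) : (Fin ℓ → K) →ₗ[K] K :=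
  ∑ i, c i • LinearMap.proj i

/-- The hyperplane (through the origin) with coefficient vector `c`. -/
noncomputable def hypl (c : Fin ℓ → K) : Submodule K (Fin ℓ → K) :=
  LinearMap.ker (ellf c)

/-- The degree-one defining form `α = ∑ c_i x_i` of the hyperplane with coefficients `c`. -/
noncomputable def linForm (c : Fin ℓ → K) : MvS K ℓ := ∑ i, C (c i) * X i

/-- The defining polynomial `Q(A) = ∏_{H ∈ A} α_H` of an arrangement given by a finite
set of coefficient vectors. -/
noncomputable def Qpoly (A : Finset (Fin ℓ → K)) : MvS K ℓ := ∏ c ∈ A, linForm c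

/-- The module of logarithmic derivations of a reduced defining polynomial `Q`:
derivations `θ = ∑ θ_i ∂_i` (identified with their coefficient tuples) with `θ(Q) ∈ Q·S`. -/
def DerQ {K : Type*} [Field K] {ℓ : ℕ} (Q : MvS K ℓ) : Set (Fin ℓ → MvS K ℓ) :=
  {θ | Q ∣ ∑ i, θ i * pderiv i Q}

/-- The logarithmic derivation module `D(A)` of an arrangement. -/
noncomputable def DerA (A : Finset (Fin ℓ → K)) : Set (Fin ℓ → MvS K ℓ) :=
  DerQ (Qpoly A)

/-- A derivation is homogeneous of degree `d` if all of its coefficient polynomials are. -/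
def IsHomog {K : Type*} [Field K] {ℓ : ℕ} (θ : Fin ℓ → MvS K ℓ) (d : ℕ) : Prop :=
  ∀ i, (θ i).IsHomogeneous d

/-- A finite set of coefficient vectors honestly represents a central arrangement:
all forms are nonzero and no two define the same hyperplane. -/
def IsArrangement (A : Finset (Fin ℓ → K)) : Prop :=
  (∀ c ∈ A, c ≠ 0) ∧ ∀ c ∈ A, ∀ c' ∈ A, hypl c = hypl c' → c = c'

/-- `|(A ∪ {H})^H|`, the number of distinct intersections `H' ∩ H` for `H' ∈ A`. -/
noncomputable def restrictCount (A : Finset (Fin ℓ → K)) (h : Fin ℓ → K) : ℕ :=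
  letI := Classical.decEq (Submodule K (Fin ℓ → K))
  (A.image fun c => hypl c ⊓ hypl h).card

/-- `h` defines a genuine hyperplane that does not belong to the arrangement `A`. -/
def NotInArr (A : Finset (Fin ℓ → K)) (h : Fin ℓ → K) : Prop :=
  h ≠ 0 ∧ ∀ c ∈ A, hypl c ≠ hypl h

/-- `G` is a set of generators of `D(A)` as an `S`-module. -/
def Generates (A : Finset (Fin ℓ → K)) (G : Set (Fin ℓ → MvS K ℓ)) : Prop :=
  (∀ θ ∈ G, θ ∈ DerA A) ∧ ∀ θ ∈ DerA A, θ ∈ Submodule.span (MvS K ℓ) G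

/-- `G` is a minimal set of generators of `D(A)`. -/
def IsMinGen (A : Finset (Fin ℓ → K)) (G : Set (Fin ℓ → MvS K ℓ)) : Prop :=
  Generates A G ∧ ∀ G' ⊂ G, ¬ Generates A G'

/-- Every member of `G` is a nonzero homogeneous derivation. -/
def HomogGens {K : Type*} [Field K] {ℓ : ℕ} (G : Set (Fin ℓ → MvS K ℓ)) : Prop :=
  ∀ θ ∈ G, θ ≠ 0 ∧ ∃ d, IsHomog θ d

/-- `d` is the maximal degree occurring among the (nonzero homogeneous) members of `G`. -/
def MaxDeg {K : Type*} [Field K] {ℓ : ℕ} (G : Set (Fin ℓ → MvS K ℓ)) (d : ℕ) : Prop :=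
  (∀ θ ∈ G, ∀ e, IsHomog θ e → e ≤ d) ∧ ∃ θ ∈ G, IsHomog θ d

/-- The minimal restriction number `t_A`. -/
noncomputable def tA (A : Finset (Fin ℓ → K)) : ℕ :=
  sInf {n | ∃ h : Fin ℓ → K, NotInArr A h ∧ n = restrictCount A h}

/-- The intersection `∩_{c ∈ B} H_c` of the hyperplanes of `B`. -/
noncomputable def interSub (B : Finset (Fin ℓ → K)) : Submodule K (Fin ℓ → K) :=
  ⨅ c ∈ B, hypl c

/-- The characteristic polynomial of a central arrangement, via Whitney's formula
`χ(A,t) = ∑_{B ⊆ A} (-1)^{|B|} t^{dim ∩B}`. -/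
noncomputable def charPolyA (A : Finset (Fin ℓ → K)) : Polynomial ℤ :=
  ∑ B ∈ A.powerset,
    ((-1 : Polynomial ℤ) ^ B.card) * Polynomial.X ^ (Module.finrank K (interSub B))

/-- `D(Q)` is a free `S`-module with a homogeneous basis of degrees `e 0, ..., e (ℓ-1)`. -/
def IsFreeQWithExp {K : Type*} [Field K] {ℓ : ℕ} (Q : MvS K ℓ) (e : Fin ℓ → ℕ) : Prop :=
  ∃ θ : Fin ℓ → (Fin ℓ → MvS K ℓ),
    (∀ i, θ i ∈ DerQ Q ∧ θ i ≠ 0 ∧ IsHomog (θ i) (e i)) ∧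
    LinearIndependent (MvS K ℓ) θ ∧
    ∀ φ ∈ DerQ Q, φ ∈ Submodule.span (MvS K ℓ) (Set.range θ)

/-- `D(Q)` is a free `S`-module. -/
def IsFreeQ {K : Type*} [Field K] {ℓ : ℕ} (Q : MvS K ℓ) : Prop :=
  ∃ e, IsFreeQWithExp Q e

/-- The arrangement `A` is free. -/
noncomputable def IsFreeArr (A : Finset (Fin ℓ → K)) : Prop := IsFreeQ (Qpoly A)

/-- The rank of a set of hyperplanes: the codimension of their common intersection,
i.e. the dimension of the span of their defining functionals. -/
noncomputable def rkSet (s : Set (Fin ℓ → K)) : ℕ :=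
  Module.finrank K (Submodule.span K s)

/-- The Euler derivation `θ_E = ∑ x_i ∂_i`. -/
noncomputable def eulerDer (K : Type*) [Field K] (ℓ : ℕ) : Fin ℓ → MvS K ℓ :=
  fun i => X i

/-- `B` is solvable in `A` (Jambu–Papadima). -/
def Solvable (B A : Finset (Fin ℓ → K)) : Prop :=
  B ⊆ A ∧
  (∀ α ∈ B, ∀ β ∈ B, α ≠ β → ∀ a ∈ A, a ∉ B → rkSet {α, β, a} = 3) ∧
  (∀ a ∈ A, a ∉ B → ∀ b ∈ A, b ∉ B → a ≠ b → ∃ α ∈ B, rkSet {a, b, α} = 2) ∧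
  (∀ a ∈ A, a ∉ B → ∀ b ∈ A, b ∉ B → ∀ c ∈ A, c ∉ B →
    a ≠ b → a ≠ c → b ≠ c →
    ∀ α ∈ B, ∀ β ∈ B, ∀ γ ∈ B,
      rkSet {a, b, α} = 2 → rkSet {a, c, β} = 2 → rkSet {b, c, γ} = 2 →
      rkSet {α, β, γ} ≤ 2)

/-- The hyperplane `{x_i = x_j}` of a graphic arrangement. -/
noncomputable def edgeHyp (K : Type*) [Field K] {ℓ : ℕ} (i j : Fin ℓ) :
    Submodule K (Fin ℓ → K) :=
  LinearMap.ker ((LinearMap.proj (R := K) (φ := fun _ : Fin ℓ => K) i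
    - LinearMap.proj (R := K) (φ := fun _ : Fin ℓ => K) j))

/-- The coefficient vector of the form `x_i - x_j`. -/
def eform (K : Type*) [Field K] {ℓ : ℕ} (i j : Fin ℓ) : Fin ℓ → K :=
  fun t => if t = i then 1 else if t = j then -1 else 0

/-- The set of defining forms of the graphic arrangement `A_G`. -/
noncomputable def graphForms (K : Type*) [Field K] {ℓ : ℕ} (G : SimpleGraph (Fin ℓ)) :
    Finset (Fin ℓ → K) :=
  letI := Classical.decEq (Fin ℓ → K)
  letI : DecidablePred (fun p : Fin ℓ × Fin ℓ => G.Adj p.1 p.2 ∧ p.1 < p.2) :=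
    fun _ => Classical.propDecidable _
  Finset.image (fun p : Fin ℓ × Fin ℓ => eform K p.1 p.2)
    (Finset.univ.filter fun p : Fin ℓ × Fin ℓ => G.Adj p.1 p.2 ∧ p.1 < p.2)

/-- `Tri(G)`: the maximal number of new triangles created by adding a single edge. -/
noncomputable def TriG {ℓ : ℕ} (G : SimpleGraph (Fin ℓ)) : ℕ :=
  sSup {n | ∃ u v : Fin ℓ, u ≠ v ∧ ¬ G.Adj u v ∧
    n = {w | G.Adj u w ∧ G.Adj v w}.ncard}

section Helpers

variable {K : Type*} [Field K]

lemma key_sub_dvd (i : Fin 3) (s : Fin 3 → MvS K 3) (hs : ∀ j, j ≠ i → s j = X j)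
    (f : MvS K 3) : (X i - s i) ∣ (f - aeval s f) := by
  induction f using MvPolynomial.induction_on with
  | C a => simp
  | add p q hp hq =>
      have h : (p + q) - aeval s (p + q) = (p - aeval s p) + (q - aeval s q) := by
        rw [map_add]; ring
      rw [h]; exact dvd_add hp hq
  | mul_X p j hp =>
      have h1 : p * X j - aeval s (p * X j)
          = (p - aeval s p) * X j + aeval s p * (X j - s j) := by
        rw [map_mul, aeval_X]; ring
      rw [h1]
      refine dvd_add (hp.mul_right _) ?_
      rcases eq_or_ne j i with rfl | hji
      · exact Dvd.dvd.mul_left dvd_rfl _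
      · rw [hs j hji, sub_self, mul_zero]; exact dvd_zero _

lemma key_dvd_iff (i : Fin 3) (s : Fin 3 → MvS K 3) (hs : ∀ j, j ≠ i → s j = X j)
    (h0 : aeval s (s i) = s i) (f : MvS K 3) : (X i - s i) ∣ f ↔ aeval s f = 0 := by
  constructor
  · rintro ⟨g, rfl⟩
    rw [map_mul, map_sub, aeval_X, h0, sub_self, zero_mul]
  · intro h
    have h2 := key_sub_dvd i s hs f
    rwa [h, sub_zero] at h2

lemma key_prime (i : Fin 3) (s : Fin 3 → MvS K 3) (hs : ∀ j, j ≠ i → s j = X j)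
    (h0 : aeval s (s i) = s i) (hne : (X i - s i : MvS K 3) ≠ 0) :
    Prime (X i - s i) := by
  refine ⟨hne, ?_, ?_⟩
  · intro hu
    have h1 : (X i - s i) ∣ 1 := hu.dvd
    rw [key_dvd_iff i s hs h0] at h1
    simp at h1
  · intro a b hab
    rw [key_dvd_iff i s hs h0, map_mul] at hab
    rcases mul_eq_zero.mp hab with h | h
    · exact Or.inl ((key_dvd_iff i s hs h0 a).mpr h)
    · exact Or.inr ((key_dvd_iff i s hs h0 b).mpr h)

lemma ne_zero_of_eval (p : Fin 3 → K) (f : MvS K 3) (h : eval p f ≠ 0) : f ≠ 0 :=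
  fun hf => h (by rw [hf, map_zero])

lemma not_dvd_of_eval (p : Fin 3 → K) (a r : MvS K 3) (ha : eval p a = 0)
    (hr : eval p r ≠ 0) : ¬ a ∣ r := by
  rintro ⟨c, rfl⟩
  rw [map_mul, ha, zero_mul] at hr
  exact hr rfl

lemma dvd_iff_X0 (f : MvS K 3) :
    (X 0 : MvS K 3) ∣ f ↔ aeval (![0, X 1, X 2] : Fin 3 → MvS K 3) f = 0 := by
  have h := key_dvd_iff 0 ![0, X 1, X 2]
    (by intro j hj; fin_cases j <;> simp_all) (by simp) f
  simpa using h

lemma prime_X0 : Prime (X 0 : MvS K 3) := by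
  have h := key_prime 0 (![0, X 1, X 2] : Fin 3 → MvS K 3)
    (by intro j hj; fin_cases j <;> simp_all) (by simp)
    (by simpa using ne_zero_of_eval ![1,0,0] _ (by simp))
  simpa using h

lemma prime_X1 : Prime (X 1 : MvS K 3) := by
  have h := key_prime 1 (![X 0, 0, X 2] : Fin 3 → MvS K 3)
    (by intro j hj; fin_cases j <;> simp_all) (by simp)
    (by simpa using ne_zero_of_eval ![0,1,0] _ (by simp))
  simpa using h

lemma prime_X2 : Prime (X 2 : MvS K 3) := by
  have h := key_prime 2 (![X 0, X 1, 0] : Fin 3 → MvS K 3)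
    (by intro j hj; fin_cases j <;> simp_all) (by simp)
    (by simpa using ne_zero_of_eval ![0,0,1] _ (by simp))
  simpa using h

/-- The substitution `z ↦ y`. -/
noncomputable def tauS (K : Type*) [Field K] : MvS K 3 →ₐ[K] MvS K 3 :=
  aeval ![X 0, X 1, X 1]

@[simp] lemma tauS_X0 : tauS K (X 0) = X 0 := by simp [tauS]
@[simp] lemma tauS_X1 : tauS K (X 1) = X 1 := by simp [tauS]
@[simp] lemma tauS_X2 : tauS K (X 2) = X 1 := by simp [tauS]

lemma dvd_iff_sub (f : MvS K 3) :
    (X 1 - X 2 : MvS K 3) ∣ f ↔ tauS K f = 0 := by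
  have h := key_dvd_iff 2 ![X 0, X 1, X 1]
    (by intro j hj; fin_cases j <;> simp_all) (by simp) f
  have h2 : (X 2 - X 1 : MvS K 3) ∣ f ↔ tauS K f = 0 := by
    simpa [tauS] using h
  rw [show (X 1 - X 2 : MvS K 3) = -(X 2 - X 1) by ring, neg_dvd]
  exact h2

lemma prime_sub : Prime (X 1 - X 2 : MvS K 3) := by
  have h := (key_prime 2 (![X 0, X 1, X 1] : Fin 3 → MvS K 3)
    (by intro j hj; fin_cases j <;> simp_all) (by simp)
    (by simpa using ne_zero_of_eval ![0,0,1] _ (by simp))).neg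
  simpa [neg_sub] using h

lemma dvd_iff_lin (c : K) (f : MvS K 3) :
    (X 0 + C c * X 1 : MvS K 3) ∣ f ↔
      aeval (![-(C c * X 1), X 1, X 2] : Fin 3 → MvS K 3) f = 0 := by
  have h := key_dvd_iff 0 ![-(C c * X 1), X 1, X 2]
    (by intro j hj; fin_cases j <;> simp_all) (by simp) f
  simpa [sub_neg_eq_add] using h

lemma prime_lin (c : K) : Prime (X 0 + C c * X 1 : MvS K 3) := by
  have h := key_prime 0 (![-(C c * X 1), X 1, X 2] : Fin 3 → MvS K 3)
    (by intro j hj; fin_cases j <;> simp_all) (by simp)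
    (by simpa [sub_neg_eq_add] using ne_zero_of_eval ![1,0,0] _ (by simp))
  simpa [sub_neg_eq_add] using h

lemma tauS_tauS (w : MvS K 3) : tauS K (tauS K w) = tauS K w := by
  induction w using MvPolynomial.induction_on with
  | C a => simp [tauS]
  | add p q hp hq => simp only [map_add, hp, hq]
  | mul_X p j hp =>
      rw [map_mul, map_mul, hp]
      congr 1
      fin_cases j <;> simp

lemma prime_cancel {p a b : MvS K 3} (hp : Prime p) (h : p ∣ a * b) (hna : ¬ p ∣ a) :
    p ∣ b := (hp.2.2 a b h).resolve_left hna

lemma prod_primes_dvd (s : Finset ℕ) (F : ℕ → MvS K 3) (u : MvS K 3)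
    (hprime : ∀ k ∈ s, Prime (F k))
    (hpair : ∀ k ∈ s, ∀ j ∈ s, k ≠ j → ¬ F k ∣ F j)
    (h : ∀ k ∈ s, F k ∣ u) : (∏ k ∈ s, F k) ∣ u := by
  classical
  induction s using Finset.induction_on with
  | empty => simpa using one_dvd u
  | @insert a s ha ih =>
      rw [Finset.prod_insert ha]
      obtain ⟨w, rfl⟩ := ih (fun k hk => hprime k (Finset.mem_insert_of_mem hk))
        (fun k hk j hj hkj => hpair k (Finset.mem_insert_of_mem hk) j
          (Finset.mem_insert_of_mem hj) hkj)
        (fun k hk => h k (Finset.mem_insert_of_mem hk))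
      have hFa : F a ∣ (∏ k ∈ s, F k) * w := h a (Finset.mem_insert_self a s)
      have hnd : ¬ F a ∣ ∏ k ∈ s, F k := by
        intro hd
        obtain ⟨j, hj, hdj⟩ :=
          (hprime a (Finset.mem_insert_self a s)).exists_mem_finset_dvd hd
        exact hpair a (Finset.mem_insert_self a s) j (Finset.mem_insert_of_mem hj)
          (fun haj => ha (haj ▸ hj)) hdj
      obtain ⟨w', rfl⟩ := prime_cancel (hprime a (Finset.mem_insert_self a s)) hFa hnd
      exact ⟨w', by ring⟩

lemma pderiv2_prod (s : Finset ℕ) :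
    pderiv 2 (∏ k ∈ s, (X 0 + C (k:K) * X 1) : MvS K 3) = 0 := by
  classical
  induction s using Finset.induction_on with
  | empty => simp
  | @insert a s hk ih =>
      rw [Finset.prod_insert hk, pderiv_mul, ih]
      simp [pderiv_X_of_ne (show (0:Fin 3) ≠ 2 by decide),
        pderiv_X_of_ne (show (1:Fin 3) ≠ 2 by decide)]

lemma euler_prod (s : Finset ℕ) :
    X 0 * pderiv 0 (∏ k ∈ s, (X 0 + C (k:K) * X 1) : MvS K 3)
      + X 1 * pderiv 1 (∏ k ∈ s, (X 0 + C (k:K) * X 1) : MvS K 3)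
      = (s.card : MvS K 3) * ∏ k ∈ s, (X 0 + C (k:K) * X 1) := by
  classical
  induction s using Finset.induction_on with
  | empty => simp
  | @insert a s hk ih =>
      rw [Finset.prod_insert hk, pderiv_mul, pderiv_mul, Finset.card_insert_of_notMem hk]
      have h1 : pderiv 0 (X 0 + C (a:K) * X 1 : MvS K 3) = 1 := by
        simp [pderiv_X_of_ne (show (1:Fin 3) ≠ 0 by decide)]
      have h2 : pderiv 1 (X 0 + C (a:K) * X 1 : MvS K 3) = C (a:K) := by
        simp [pderiv_X_of_ne (show (0:Fin 3) ≠ 1 by decide)]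
      rw [h1, h2]
      push_cast
      linear_combination (X 0 + C (a:K) * X 1) * ih

end Helpers

/-- `D(B_n)` for `Q = xz(y-z)∏_{k=1}^n (x+ky)` is generated by `θ_E`,
`z(y-z)∂_z`, `x∏(x+ky)∂_x` and `(y-z)∏(x+ky)∂_y`. -/
theorem stmt7 {K : Type*} [Field K] [CharZero K] (n : ℕ) (hn : 1 ≤ n) :
    let P : MvS K 3 := ∏ k ∈ Finset.Icc 1 n, (X 0 + C (k : K) * X 1)
    let Q : MvS K 3 := X 0 * X 2 * (X 1 - X 2) * P
    eulerDer K 3 ∈ DerQ Q ∧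
    (![0, 0, X 2 * (X 1 - X 2)] : Fin 3 → MvS K 3) ∈ DerQ Q ∧
    (![X 0 * P, 0, 0] : Fin 3 → MvS K 3) ∈ DerQ Q ∧
    (![0, (X 1 - X 2) * P, 0] : Fin 3 → MvS K 3) ∈ DerQ Q ∧
    ∀ φ ∈ DerQ Q, φ ∈ Submodule.span (MvS K 3)
      ({eulerDer K 3, ![0, 0, X 2 * (X 1 - X 2)], ![X 0 * P, 0, 0],
        ![0, (X 1 - X 2) * P, 0]} : Set (Fin 3 → MvS K 3)) := by
  intro P Q
  classical
  have hQdef : Q = X 0 * X 2 * (X 1 - X 2) * P := rfl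
  have hPdef : P = ∏ k ∈ Finset.Icc 1 n, (X 0 + C (k : K) * X 1) := rfl
  have hP2 : pderiv 2 P = 0 := by rw [hPdef]; exact pderiv2_prod _
  have hd0 : pderiv 0 Q = X 2 * (X 1 - X 2) * P + X 0 * X 2 * (X 1 - X 2) * pderiv 0 P := by
    rw [hQdef]
    simp only [pderiv_mul, map_sub, pderiv_X_self,
      pderiv_X_of_ne (show (1:Fin 3) ≠ 0 by decide),
      pderiv_X_of_ne (show (2:Fin 3) ≠ 0 by decide)]
    ring
  have hd1 : pderiv 1 Q = X 0 * X 2 * P + X 0 * X 2 * (X 1 - X 2) * pderiv 1 P := by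
    rw [hQdef]
    simp only [pderiv_mul, map_sub, pderiv_X_self,
      pderiv_X_of_ne (show (0:Fin 3) ≠ 1 by decide),
      pderiv_X_of_ne (show (2:Fin 3) ≠ 1 by decide)]
    ring
  have hd2 : pderiv 2 Q = X 0 * (X 1 - X 2) * P - X 0 * X 2 * P := by
    rw [hQdef]
    simp only [pderiv_mul, map_sub, hP2, pderiv_X_self,
      pderiv_X_of_ne (show (0:Fin 3) ≠ 2 by decide),
      pderiv_X_of_ne (show (1:Fin 3) ≠ 2 by decide)]
    ring
  have heu : X 0 * pderiv 0 P + X 1 * pderiv 1 P = (n : MvS K 3) * P := by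
    have h := euler_prod (K := K) (Finset.Icc 1 n)
    rw [← hPdef] at h
    simpa [Nat.card_Icc] using h
  have hPval : ∀ p : Fin 3 → K, eval p P = ∏ k ∈ Finset.Icc 1 n, (p 0 + (k:K) * p 1) := by
    intro p
    rw [hPdef, map_prod]
    exact Finset.prod_congr rfl fun k _ => by simp
  have hprod1 : (∏ k ∈ Finset.Icc 1 n, ((1:K) + (k:K))) ≠ 0 := by
    refine Finset.prod_ne_zero_iff.mpr fun k hk => ?_
    have h : ((1 + k : ℕ) : K) ≠ 0 := Nat.cast_ne_zero.mpr (by omega)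
    simpa [Nat.cast_add] using h
  refine ⟨?_, ?_, ?_, ?_, ?_⟩
  · show Q ∣ ∑ i, eulerDer K 3 i * pderiv i Q
    refine ⟨(n : MvS K 3) + 3, ?_⟩
    rw [Fin.sum_univ_three]
    simp only [eulerDer]
    rw [hd0, hd1, hd2, hQdef]
    linear_combination X 0 * X 2 * (X 1 - X 2) * heu
  · show Q ∣ ∑ i, (![0, 0, X 2 * (X 1 - X 2)] : Fin 3 → MvS K 3) i * pderiv i Q
    refine ⟨X 1 - 2 * X 2, ?_⟩
    rw [Fin.sum_univ_three, hd0, hd1, hd2, hQdef]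
    simp only [Matrix.cons_val_zero, Matrix.cons_val_one, Matrix.head_cons,
      Matrix.cons_val_two, Matrix.tail_cons]
    ring
  · show Q ∣ ∑ i, (![X 0 * P, 0, 0] : Fin 3 → MvS K 3) i * pderiv i Q
    refine ⟨P + X 0 * pderiv 0 P, ?_⟩
    rw [Fin.sum_univ_three, hd0, hd1, hd2, hQdef]
    simp only [Matrix.cons_val_zero, Matrix.cons_val_one, Matrix.head_cons,
      Matrix.cons_val_two, Matrix.tail_cons]
    ring
  · show Q ∣ ∑ i, (![0, (X 1 - X 2) * P, 0] : Fin 3 → MvS K 3) i * pderiv i Q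
    refine ⟨P + (X 1 - X 2) * pderiv 1 P, ?_⟩
    rw [Fin.sum_univ_three, hd0, hd1, hd2, hQdef]
    simp only [Matrix.cons_val_zero, Matrix.cons_val_one, Matrix.head_cons,
      Matrix.cons_val_two, Matrix.tail_cons]
    ring
  -- the main part
  intro φ hφ
  have hφ' : Q ∣ φ 0 * pderiv 0 Q + φ 1 * pderiv 1 Q + φ 2 * pderiv 2 Q := by
    have h := hφ
    simp only [DerQ, Set.mem_setOf_eq, Fin.sum_univ_three] at h
    exact h
  -- factor condition for X 0
  have c1 : (X 0 : MvS K 3) ∣ φ 0 := by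
    have hEx : (X 0 : MvS K 3) ∣ φ 0 * pderiv 0 Q + φ 1 * pderiv 1 Q + φ 2 * pderiv 2 Q :=
      dvd_trans (⟨X 2 * (X 1 - X 2) * P, by rw [hQdef]; ring⟩ : (X 0 : MvS K 3) ∣ Q) hφ'
    have hsplit : φ 0 * pderiv 0 Q + φ 1 * pderiv 1 Q + φ 2 * pderiv 2 Q
        - X 0 * (φ 0 * (X 2 * (X 1 - X 2) * pderiv 0 P)
          + φ 1 * (X 2 * P + X 2 * (X 1 - X 2) * pderiv 1 P)
          + φ 2 * ((X 1 - X 2) * P - X 2 * P))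
        = (X 2 * (X 1 - X 2) * P) * φ 0 := by
      rw [hd0, hd1, hd2]; ring
    have h : (X 0 : MvS K 3) ∣ (X 2 * (X 1 - X 2) * P) * φ 0 := by
      rw [← hsplit]
      exact dvd_sub hEx (dvd_mul_right _ _)
    refine prime_cancel prime_X0 h (not_dvd_of_eval ![0,1,2] _ _ (by simp) ?_)
    have hv : eval ![(0:K),1,2] (X 2 * (X 1 - X 2) * P)
        = 2 * ((1:K) - 2) * ∏ k ∈ Finset.Icc 1 n, (k:K) := by
      rw [map_mul, map_mul, map_sub, hPval]
      simp only [eval_X, Matrix.cons_val_zero, Matrix.cons_val_one, Matrix.head_cons,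
        Matrix.cons_val_two, Matrix.tail_cons]
      rw [show (∏ k ∈ Finset.Icc 1 n, ((0:K) + (k:K) * 1))
        = ∏ k ∈ Finset.Icc 1 n, (k:K) from Finset.prod_congr rfl fun k _ => by ring]
    rw [hv]
    refine mul_ne_zero (by norm_num) (Finset.prod_ne_zero_iff.mpr fun k hk => ?_)
    have := Finset.mem_Icc.mp hk
    exact Nat.cast_ne_zero.mpr (by omega)
  -- factor condition for X 2
  have c2 : (X 2 : MvS K 3) ∣ φ 2 := by
    have hEx : (X 2 : MvS K 3) ∣ φ 0 * pderiv 0 Q + φ 1 * pderiv 1 Q + φ 2 * pderiv 2 Q :=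
      dvd_trans (⟨X 0 * (X 1 - X 2) * P, by rw [hQdef]; ring⟩ : (X 2 : MvS K 3) ∣ Q) hφ'
    have hsplit : φ 0 * pderiv 0 Q + φ 1 * pderiv 1 Q + φ 2 * pderiv 2 Q
        - X 2 * (φ 0 * ((X 1 - X 2) * P + X 0 * (X 1 - X 2) * pderiv 0 P)
          + φ 1 * (X 0 * P + X 0 * (X 1 - X 2) * pderiv 1 P)
          + φ 2 * (-(X 0 * P)))
        = (X 0 * (X 1 - X 2) * P) * φ 2 := by
      rw [hd0, hd1, hd2]; ring
    have h : (X 2 : MvS K 3) ∣ (X 0 * (X 1 - X 2) * P) * φ 2 := by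
      rw [← hsplit]
      exact dvd_sub hEx (dvd_mul_right _ _)
    refine prime_cancel prime_X2 h (not_dvd_of_eval ![1,1,0] _ _ (by simp) ?_)
    have hv : eval ![(1:K),1,0] (X 0 * (X 1 - X 2) * P)
        = 1 * ((1:K) - 0) * ∏ k ∈ Finset.Icc 1 n, ((1:K) + (k:K)) := by
      rw [map_mul, map_mul, map_sub, hPval]
      simp only [eval_X, Matrix.cons_val_zero, Matrix.cons_val_one, Matrix.head_cons,
        Matrix.cons_val_two, Matrix.tail_cons]
      rw [show (∏ k ∈ Finset.Icc 1 n, ((1:K) + (k:K) * 1))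
        = ∏ k ∈ Finset.Icc 1 n, ((1:K) + (k:K)) from Finset.prod_congr rfl fun k _ => by ring]
    rw [hv]
    exact mul_ne_zero (by norm_num) hprod1
  -- factor condition for X 1 - X 2
  have c3 : (X 1 - X 2 : MvS K 3) ∣ (φ 1 - φ 2) := by
    have hEx : (X 1 - X 2 : MvS K 3) ∣ φ 0 * pderiv 0 Q + φ 1 * pderiv 1 Q + φ 2 * pderiv 2 Q :=
      dvd_trans (⟨X 0 * X 2 * P, by rw [hQdef]; ring⟩ : (X 1 - X 2 : MvS K 3) ∣ Q) hφ'
    have hsplit : φ 0 * pderiv 0 Q + φ 1 * pderiv 1 Q + φ 2 * pderiv 2 Q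
        - (X 1 - X 2) * (φ 0 * (X 2 * P + X 0 * X 2 * pderiv 0 P)
          + φ 1 * (X 0 * X 2 * pderiv 1 P)
          + φ 2 * (X 0 * P))
        = (X 0 * X 2 * P) * (φ 1 - φ 2) := by
      rw [hd0, hd1, hd2]; ring
    have h : (X 1 - X 2 : MvS K 3) ∣ (X 0 * X 2 * P) * (φ 1 - φ 2) := by
      rw [← hsplit]
      exact dvd_sub hEx (dvd_mul_right _ _)
    refine prime_cancel prime_sub h (not_dvd_of_eval ![1,1,1] _ _ (by simp) ?_)
    have hv : eval ![(1:K),1,1] (X 0 * X 2 * P)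
        = 1 * (1:K) * ∏ k ∈ Finset.Icc 1 n, ((1:K) + (k:K)) := by
      rw [map_mul, map_mul, hPval]
      simp only [eval_X, Matrix.cons_val_zero, Matrix.cons_val_one, Matrix.head_cons,
        Matrix.cons_val_two, Matrix.tail_cons]
      rw [show (∏ k ∈ Finset.Icc 1 n, ((1:K) + (k:K) * 1))
        = ∏ k ∈ Finset.Icc 1 n, ((1:K) + (k:K)) from Finset.prod_congr rfl fun k _ => by ring]
    rw [hv]
    exact mul_ne_zero (by norm_num) hprod1
  -- factor conditions for X 0 + k * X 1
  have c4 : ∀ k ∈ Finset.Icc 1 n, (X 0 + C (k:K) * X 1 : MvS K 3) ∣ (φ 0 + C (k:K) * φ 1) := by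
    intro k hk
    have hk1 : 1 ≤ k := (Finset.mem_Icc.mp hk).1
    have hkK : ((k:K)) ≠ 0 := Nat.cast_ne_zero.mpr (by omega)
    set A : MvS K 3 := X 0 + C (k:K) * X 1 with hA
    set Pk : MvS K 3 := ∏ j ∈ (Finset.Icc 1 n).erase k, (X 0 + C (j:K) * X 1) with hPkdef
    have hPk : P = A * Pk := by
      rw [hPdef, hA, hPkdef]
      exact (Finset.mul_prod_erase _ _ hk).symm
    have hA0 : pderiv 0 A = 1 := by
      rw [hA]; simp [pderiv_X_of_ne (show (1:Fin 3) ≠ 0 by decide)]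
    have hA1 : pderiv 1 A = C (k:K) := by
      rw [hA]; simp [pderiv_X_of_ne (show (0:Fin 3) ≠ 1 by decide)]
    have hp0 : pderiv 0 P = Pk + A * pderiv 0 Pk := by
      rw [hPk, pderiv_mul, hA0]; ring
    have hp1 : pderiv 1 P = C (k:K) * Pk + A * pderiv 1 Pk := by
      rw [hPk, pderiv_mul, hA1]
    have hEA : A ∣ φ 0 * pderiv 0 Q + φ 1 * pderiv 1 Q + φ 2 * pderiv 2 Q :=
      dvd_trans (⟨X 0 * X 2 * (X 1 - X 2) * Pk, by rw [hQdef, hPk]; ring⟩ : A ∣ Q) hφ'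
    have hsplit : φ 0 * pderiv 0 Q + φ 1 * pderiv 1 Q + φ 2 * pderiv 2 Q
        - A * (φ 0 * (X 2 * (X 1 - X 2) * Pk + X 0 * X 2 * (X 1 - X 2) * pderiv 0 Pk)
          + φ 1 * (X 0 * X 2 * Pk + X 0 * X 2 * (X 1 - X 2) * pderiv 1 Pk)
          + φ 2 * (X 0 * (X 1 - X 2) * Pk - X 0 * X 2 * Pk))
        = (X 0 * X 2 * (X 1 - X 2) * Pk) * (φ 0 + C (k:K) * φ 1) := by
      rw [hd0, hd1, hd2]
      linear_combination (φ 0 * (X 2 * (X 1 - X 2)) + φ 1 * (X 0 * X 2)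
          + φ 2 * (X 0 * (X 1 - X 2) - X 0 * X 2)) * hPk
        + (φ 0 * (X 0 * X 2 * (X 1 - X 2))) * hp0
        + (φ 1 * (X 0 * X 2 * (X 1 - X 2))) * hp1
    have h : A ∣ (X 0 * X 2 * (X 1 - X 2) * Pk) * (φ 0 + C (k:K) * φ 1) := by
      rw [← hsplit]
      exact dvd_sub hEA (dvd_mul_right _ _)
    have hPkval : eval ![-(k:K),1,2] Pk = ∏ j ∈ (Finset.Icc 1 n).erase k, ((j:K) - (k:K)) := by
      rw [hPkdef, map_prod]
      refine Finset.prod_congr rfl fun j hj => ?_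
      simp only [map_add, map_mul, eval_X, eval_C, Matrix.cons_val_zero, Matrix.cons_val_one,
        Matrix.head_cons]
      ring
    have hPknz : (∏ j ∈ (Finset.Icc 1 n).erase k, ((j:K) - (k:K))) ≠ 0 := by
      refine Finset.prod_ne_zero_iff.mpr fun j hj => sub_ne_zero.mpr ?_
      exact_mod_cast Finset.ne_of_mem_erase hj
    have hAnz : eval ![-(k:K),1,2] A = 0 := by
      rw [hA]
      simp only [map_add, map_mul, eval_X, eval_C, Matrix.cons_val_zero, Matrix.cons_val_one,
        Matrix.head_cons]
      ring
    have hRnz : eval ![-(k:K),1,2] (X 0 * X 2 * (X 1 - X 2) * Pk) ≠ 0 := by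
      have hv : eval ![-(k:K),1,2] (X 0 * X 2 * (X 1 - X 2) * Pk)
          = (-(k:K)) * 2 * ((1:K) - 2) * ∏ j ∈ (Finset.Icc 1 n).erase k, ((j:K) - (k:K)) := by
        rw [map_mul, map_mul, map_mul, map_sub, hPkval]
        simp only [eval_X, Matrix.cons_val_zero, Matrix.cons_val_one, Matrix.head_cons,
          Matrix.cons_val_two, Matrix.tail_cons]
      rw [hv]
      refine mul_ne_zero (mul_ne_zero (mul_ne_zero (neg_ne_zero.mpr hkK) (by norm_num))
        (by norm_num)) hPknz
    exact prime_cancel (hA ▸ prime_lin (k:K)) h (not_dvd_of_eval ![-(k:K),1,2] _ _ hAnz hRnz)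
  -- construction
  obtain ⟨f₁, hf₁⟩ := c1
  obtain ⟨h₁, hh₁⟩ := c2
  have c6 : P ∣ (φ 1 - X 1 * f₁) := by
    rw [hPdef]
    refine prod_primes_dvd _ _ _ (fun k _ => prime_lin _) ?_ ?_
    · intro k hk j hj hkj
      refine not_dvd_of_eval ![-(k:K),1,2] _ _ (by
        simp only [map_add, map_mul, eval_X, eval_C, Matrix.cons_val_zero, Matrix.cons_val_one,
          Matrix.head_cons]
        ring) ?_
      simp only [map_add, map_mul, eval_X, eval_C, Matrix.cons_val_zero, Matrix.cons_val_one,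
        Matrix.head_cons]
      have hjk : ((j:K)) ≠ ((k:K)) := by exact_mod_cast hkj.symm
      intro hcon
      apply hjk
      linear_combination hcon
    · intro k hk
      have hk1 : 1 ≤ k := (Finset.mem_Icc.mp hk).1
      have hkK : ((k:K)) ≠ 0 := Nat.cast_ne_zero.mpr (by omega)
      have h4 := c4 k hk
      have h5 : (X 0 + C (k:K) * X 1 : MvS K 3) ∣ X 0 * (X 1 * f₁ - φ 1) := by
        have h6 : X 0 * (X 1 * f₁ - φ 1)
            = X 1 * (φ 0 + C (k:K) * φ 1) - φ 1 * (X 0 + C (k:K) * X 1) := by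
          linear_combination (-(X 1)) * hf₁
        rw [h6]
        exact dvd_sub (h4.mul_left _) (dvd_mul_left _ _)
      have h7 := prime_cancel (prime_lin (k:K)) h5 (not_dvd_of_eval ![-(k:K),1,2] _ _ (by
          simp only [map_add, map_mul, eval_X, eval_C, Matrix.cons_val_zero,
            Matrix.cons_val_one, Matrix.head_cons]
          ring) (by
          simp only [eval_X, Matrix.cons_val_zero]
          exact neg_ne_zero.mpr hkK))
      have h8 : φ 1 - X 1 * f₁ = -(X 1 * f₁ - φ 1) := by ring
      rw [h8]
      exact dvd_neg.mpr h7
  obtain ⟨G₁, hG₁⟩ := c6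
  -- tau facts
  have hτP : tauS K P = P := by
    rw [hPdef, map_prod]
    exact Finset.prod_congr rfl fun k _ => by
      rw [map_add, map_mul]
      simp
  have e1 : tauS K (φ 1) = X 1 * tauS K f₁ + P * tauS K G₁ := by
    have h9 : φ 1 = X 1 * f₁ + P * G₁ := by linear_combination hG₁
    rw [h9, map_add, map_mul, map_mul, hτP, tauS_X1]
  have e2 : tauS K (φ 2) = X 1 * tauS K h₁ := by
    rw [hh₁, map_mul, tauS_X2]
  have e3 : tauS K (φ 1) = tauS K (φ 2) := by
    have h10 := (dvd_iff_sub _).mp c3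
    rw [map_sub, sub_eq_zero] at h10
    exact h10
  have hstar : P * tauS K G₁ = X 1 * (tauS K h₁ - tauS K f₁) := by
    linear_combination e2 + e3 - e1
  have hX1P : ¬ (X 1 : MvS K 3) ∣ P := by
    refine not_dvd_of_eval ![1,0,0] _ _ (by simp) ?_
    rw [hPval]
    simp
  have h11 : (X 1 : MvS K 3) ∣ P * tauS K G₁ := by
    rw [hstar]; exact dvd_mul_right _ _
  obtain ⟨u₀, hu₀⟩ := prime_cancel prime_X1 h11 hX1P
  set u : MvS K 3 := tauS K u₀ with hudef
  have hτu : tauS K u = u := tauS_tauS u₀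
  have hu : tauS K G₁ = X 1 * u := by
    rw [← tauS_tauS G₁, hu₀, map_mul, tauS_X1, hudef]
  have hGv : (X 1 - X 2 : MvS K 3) ∣ (G₁ - X 1 * u) := by
    rw [dvd_iff_sub, map_sub, map_mul, tauS_X1, hu, hτu, sub_self]
  obtain ⟨v, hv⟩ := hGv
  have hX1ne : (X 1 : MvS K 3) ≠ 0 := X_ne_zero 1
  have h12 : tauS K h₁ - tauS K f₁ = u * P := by
    have h13 : X 1 * (tauS K h₁ - tauS K f₁) = X 1 * (u * P) := by
      rw [hu] at hstar
      linear_combination -hstar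
    exact mul_left_cancel₀ hX1ne h13
  have hbd : (X 1 - X 2 : MvS K 3) ∣ (h₁ - f₁ - u * P) := by
    rw [dvd_iff_sub, map_sub, map_sub, map_mul, hτP, hτu]
    linear_combination h12
  obtain ⟨b, hb⟩ := hbd
  -- final assembly
  have hrep : φ = (f₁ + u * P) • (eulerDer K 3)
      + b • (![0, 0, X 2 * (X 1 - X 2)] : Fin 3 → MvS K 3)
      + (-u) • (![X 0 * P, 0, 0] : Fin 3 → MvS K 3)
      + v • (![0, (X 1 - X 2) * P, 0] : Fin 3 → MvS K 3) := by
    have h0 : φ 0 = ((f₁ + u * P) • (eulerDer K 3)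
        + b • (![0, 0, X 2 * (X 1 - X 2)] : Fin 3 → MvS K 3)
        + (-u) • (![X 0 * P, 0, 0] : Fin 3 → MvS K 3)
        + v • (![0, (X 1 - X 2) * P, 0] : Fin 3 → MvS K 3)) 0 := by
      simp only [Pi.add_apply, Pi.smul_apply, smul_eq_mul, eulerDer,
        Matrix.cons_val_zero, Matrix.cons_val_one, Matrix.head_cons,
        Matrix.cons_val_two, Matrix.tail_cons]
      linear_combination hf₁
    have h1 : φ 1 = ((f₁ + u * P) • (eulerDer K 3)
        + b • (![0, 0, X 2 * (X 1 - X 2)] : Fin 3 → MvS K 3)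
        + (-u) • (![X 0 * P, 0, 0] : Fin 3 → MvS K 3)
        + v • (![0, (X 1 - X 2) * P, 0] : Fin 3 → MvS K 3)) 1 := by
      simp only [Pi.add_apply, Pi.smul_apply, smul_eq_mul, eulerDer,
        Matrix.cons_val_zero, Matrix.cons_val_one, Matrix.head_cons,
        Matrix.cons_val_two, Matrix.tail_cons]
      linear_combination hG₁ + P * hv
    have h2 : φ 2 = ((f₁ + u * P) • (eulerDer K 3)
        + b • (![0, 0, X 2 * (X 1 - X 2)] : Fin 3 → MvS K 3)
        + (-u) • (![X 0 * P, 0, 0] : Fin 3 → MvS K 3)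
        + v • (![0, (X 1 - X 2) * P, 0] : Fin 3 → MvS K 3)) 2 := by
      simp only [Pi.add_apply, Pi.smul_apply, smul_eq_mul, eulerDer,
        Matrix.cons_val_zero, Matrix.cons_val_one, Matrix.head_cons,
        Matrix.cons_val_two, Matrix.tail_cons]
      linear_combination hh₁ + X 2 * hb
    funext i
    fin_cases i
    · exact h0
    · exact h1
    · exact h2
  rw [hrep]
  refine Submodule.add_mem _ (Submodule.add_mem _ (Submodule.add_mem _ ?_ ?_) ?_) ?_
  · exact Submodule.smul_mem _ _ (Submodule.subset_span (by simp))
  · exact Submodule.smul_mem _ _ (Submodule.subset_span (by simp))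
  · exact Submodule.smul_mem _ _ (Submodule.subset_span (by simp))
  · exact Submodule.smul_mem _ _ (Submodule.subset_span (by simp))
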